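/- Define ψ: ℕ → ℝ by ψ(d) = 0 for d ∈ {0,1,2}, ψ(3) = 5/4, and ψ(d) = d/2 for d ≥ 4. Then for every finite simple graph G, s(G) ≤ (1/5) · Σ_{v ∈ V(G)} ψ(deg_G(v)). -/

import Mathlib

open SimpleGraph

/-- `G` has a `K₄` minor (branch-set formulation: four nonempty, pairwise disjoint,
connected branch sets with an edge between every two of them). -/
def HasK4Minor {V : Type*} (G : SimpleGraph V) : Prop :=
  ∃ B : Fin 4 → Set V,
    (∀ i, (B i).Nonempty) ∧
    (∀ i, (G.induce (B i)).Connected) ∧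
    (∀ i j, i ≠ j → Disjoint (B i) (B j)) ∧
    (∀ i j, i ≠ j → ∃ u ∈ B i, ∃ v ∈ B j, G.Adj u v)

/-- `X` is a transversal of `G`: the graph `G − X` has no `K₄` minor. -/
def IsTransversal {V : Type*} (G : SimpleGraph V) (X : Finset V) : Prop :=
  ¬ HasK4Minor (G.induce ((↑X : Set V)ᶜ))

/-- `s(G)`: the minimum size of a transversal of `G`. -/
noncomputable def transNum {V : Type*} (G : SimpleGraph V) : ℕ :=
  sInf {n : ℕ | ∃ X : Finset V, X.card = n ∧ IsTransversal G X}

/-- The potential function: `ψ(d) = 0` for `d ∈ {0,1,2}`, `ψ(3) = 5/4`, and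
`ψ(d) = d/2` for `d ≥ 4`. -/
noncomputable def psi (d : ℕ) : ℝ :=
  if d ≤ 2 then 0 else if d = 3 then 5 / 4 else (d : ℝ) / 2


set_option maxHeartbeats 1000000
section Helpers

lemma psi_nonneg (d : ℕ) : 0 ≤ psi d := by
  unfold psi; split_ifs <;> positivity

lemma psi_of_ge {d : ℕ} (h : 4 ≤ d) : psi d = (d : ℝ) / 2 := by
  unfold psi; rw [if_neg (by omega), if_neg (by omega)]

lemma psi_three : psi 3 = 5/4 := by norm_num [psi]

lemma psi_of_le {d : ℕ} (h : d ≤ 2) : psi d = 0 := by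
  unfold psi; rw [if_pos h]

lemma psi_mono {a b : ℕ} (h : a ≤ b) : psi a ≤ psi b := by
  rcases Nat.lt_or_ge a 3 with ha | ha
  · rw [psi_of_le (by omega)]; exact psi_nonneg b
  rcases Nat.lt_or_ge a 4 with ha4 | ha4
  · have hae : a = 3 := by omega
    subst hae
    rcases Nat.lt_or_ge b 4 with hb | hb
    · have : b = 3 := by omega
      subst this; exact le_refl _
    · rw [psi_three, psi_of_ge hb]
      have : (4:ℝ) ≤ (b:ℝ) := by exact_mod_cast hb
      linarith
  · rw [psi_of_ge ha4, psi_of_ge (le_trans ha4 h)]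
    have : (a:ℝ) ≤ (b:ℝ) := by exact_mod_cast h
    linarith

lemma psi_drop {a D : ℕ} (ha : 3 ≤ a) (haD : a ≤ D) :
    psi (a - 1) + (5 - psi D) / D ≤ psi a := by
  have hD3 : 3 ≤ D := le_trans ha haD
  have hD0 : (0:ℝ) < (D:ℝ) := by
    have : (3:ℝ) ≤ (D:ℝ) := by exact_mod_cast hD3
    linarith
  have hmain : (5 - psi D) ≤ (psi a - psi (a-1)) * D → psi (a - 1) + (5 - psi D) / D ≤ psi a := by
    intro h
    have := (div_le_iff₀ hD0).mpr h
    linarith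
  apply hmain
  have hdelta : psi (a-1) + 1/2 ≤ psi a ∧ (a = 3 → psi (a-1) + 5/4 ≤ psi a)
      ∧ (a ≤ 4 → psi (a-1) + 3/4 ≤ psi a) := by
    rcases Nat.lt_or_ge a 4 with h4 | h4
    · have : a = 3 := by omega
      subst this
      norm_num [psi_three, psi_of_le]
    rcases Nat.lt_or_ge a 5 with h5 | h5
    · have : a = 4 := by omega
      subst this
      norm_num [psi_three, psi_of_ge]
    · have h1 : psi a = (a:ℝ)/2 := psi_of_ge (by omega)
      have h2 : psi (a-1) = ((a-1 : ℕ):ℝ)/2 := psi_of_ge (by omega)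
      have h3 : ((a-1 : ℕ):ℝ) = (a:ℝ) - 1 := by
        have : (1:ℕ) ≤ a := by omega
        push_cast [Nat.cast_sub this]; ring
      constructor
      · rw [h1, h2, h3]; linarith
      constructor
      · intro h; omega
      · intro h; omega
  obtain ⟨hd1, hd2, hd3⟩ := hdelta
  have hDcast : (3:ℝ) ≤ (D:ℝ) := by exact_mod_cast hD3
  rcases Nat.lt_or_ge D 4 with hD4 | hD4
  · have : D = 3 := by omega
    subst this
    have : a = 3 := by omega
    have := hd2 this
    rw [psi_three]
    push_cast
    nlinarith [this]
  rcases Nat.lt_or_ge D 5 with hD5 | hD5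
  · have : D = 4 := by omega
    subst this
    have := hd3 (by omega)
    rw [psi_of_ge (le_refl 4)]
    push_cast
    nlinarith [this]
  · have hDpsi : psi D = (D:ℝ)/2 := psi_of_ge (by omega)
    have hD5c : (5:ℝ) ≤ (D:ℝ) := by exact_mod_cast hD5
    rw [hDpsi]
    nlinarith [hd1]

lemma connected_induce_image {W U : Type*} {H : SimpleGraph W} {K : SimpleGraph U}
    (f : W → U) (S : Set W)
    (hadj : ∀ a b, a ∈ S → b ∈ S → H.Adj a b → K.Adj (f a) (f b))
    (hc : (H.induce S).Connected) : (K.induce (f '' S)).Connected := by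
  let hhom : H.induce S →g K.induce (f '' S) :=
    { toFun := fun x => ⟨f x.1, ⟨x.1, x.2, rfl⟩⟩
      map_rel' := fun {a b} hab => hadj a.1 b.1 a.2 b.2 hab }
  apply hc.map hhom
  rintro ⟨y, x, hx, rfl⟩
  exact ⟨⟨x, hx⟩, rfl⟩

lemma hasK4Minor_map {W U : Type*} {H : SimpleGraph W} {K : SimpleGraph U} (f : W → U)
    (hinj : Function.Injective f) (hadj : ∀ a b, H.Adj a b → K.Adj (f a) (f b)) :
    HasK4Minor H → HasK4Minor K := by
  rintro ⟨B, hne, hconn, hdisj, hedge⟩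
  refine ⟨fun i => f '' B i, fun i => (hne i).image f, 
    fun i => connected_induce_image f (B i) (fun a b _ _ h => hadj a b h) (hconn i),
    fun i j hij => ?_, fun i j hij => ?_⟩
  · rw [Set.disjoint_left]
    rintro a ⟨x, hx, rfl⟩ ⟨y, hy, hxy⟩
    exact Set.disjoint_left.mp (hdisj i j hij) hx (hinj hxy ▸ hy)
  · obtain ⟨x, hx, y, hy, hxy⟩ := hedge i j hij
    exact ⟨f x, ⟨x, hx, rfl⟩, f y, ⟨y, hy, rfl⟩, hadj x y hxy⟩

lemma not_hasK4Minor_of_subsingleton {W : Type*} [Subsingleton W] (H : SimpleGraph W) :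
    ¬ HasK4Minor H := by
  rintro ⟨B, hne, _, hdisj, _⟩
  obtain ⟨a, ha⟩ := hne 0
  obtain ⟨b, hb⟩ := hne 1
  exact Set.disjoint_left.mp (hdisj 0 1 (by decide)) ha (Subsingleton.elim b a ▸ hb)

lemma exists_adj_of_connected {W : Type*} {H : SimpleGraph W} {S : Set W}
    (hc : (H.induce S).Connected) {v z : W} (hv : v ∈ S) (hz : z ∈ S) (hne : z ≠ v) :
    ∃ y ∈ S, H.Adj v y := by
  obtain ⟨p⟩ := hc.preconnected ⟨v, hv⟩ ⟨z, hz⟩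
  cases p with
  | nil => exact absurd rfl hne
  | cons h q => exact ⟨_, (Subtype.mem _), h⟩

lemma connected_surgery {W U : Type*} {H : SimpleGraph W} {K : SimpleGraph U}
    (v u w : W) (f : W → U) (hu : u ≠ v) (hw : w ≠ v)
    (hN : H.neighborSet v ⊆ {u, w})
    (hK1 : ∀ a b : W, a ≠ v → b ≠ v → H.Adj a b → K.Adj (f a) (f b))
    (hK2 : u ≠ w → K.Adj (f u) (f w))
    {S : Set W} (hconn : (H.induce S).Connected)
    (hSne : ∃ z ∈ S, z ≠ v) :
    (K.induce (f '' (S \ {v}))).Connected := by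
  obtain ⟨z₀, hz₀S, hz₀v⟩ := hSne
  have memT : ∀ (a : W), a ∈ S → a ≠ v → f a ∈ f '' (S \ {v}) :=
    fun a h1 h2 => ⟨a, ⟨h1, h2⟩, rfl⟩
  rw [SimpleGraph.connected_iff]
  refine ⟨?_, ⟨⟨f z₀, memT _ hz₀S hz₀v⟩⟩⟩
  have key : ∀ (n : ℕ) (a b : ↥S) (hav : (a:W) ≠ v) (hbv : (b:W) ≠ v)
      (p : (H.induce S).Walk a b), p.length ≤ n →
      (K.induce (f '' (S \ {v}))).Reachable ⟨f a, memT _ a.2 hav⟩ ⟨f b, memT _ b.2 hbv⟩ := by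
    intro n
    induction n with
    | zero =>
      intro a b hav hbv p hlen
      cases p with
      | nil => exact SimpleGraph.Reachable.refl _
      | cons h q => simp [SimpleGraph.Walk.length_cons] at hlen
    | succ n ih =>
      intro a b hav hbv p hlen
      cases p with
      | nil => exact SimpleGraph.Reachable.refl _
      | @cons _ c _ h q =>
        by_cases hcv : (c : W) = v
        · -- next vertex is v; peel one more step
          cases q with
          | nil => exact absurd hcv hbv
          | @cons _ d _ h2 r =>
            have hadj2 : H.Adj (c : W) (d : W) := h2
            have hdN : (d : W) ∈ H.neighborSet v := by
              rw [← hcv]; exact hadj2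
            have hdv : (d : W) ≠ v := fun hh => H.irrefl (hh ▸ (hcv ▸ hadj2))
            have haN : (a : W) ∈ H.neighborSet v := by
              have : H.Adj (a : W) (c : W) := h
              rw [hcv] at this; exact this.symm
            have hrlen : r.length ≤ n := by
              simp [SimpleGraph.Walk.length_cons] at hlen; omega
            by_cases had : a = d
            · subst had
              exact ih a b hav hbv r hrlen
            · have hadW : (a : W) ≠ (d : W) := fun hh => had (Subtype.ext hh)
              have hedge : (K.induce (f '' (S \ {v}))).Adj
                  ⟨f a, memT _ a.2 hav⟩ ⟨f d, memT _ d.2 hdv⟩ := by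
                have ha2 := hN haN
                have hd2 := hN hdN
                simp only [Set.mem_insert_iff, Set.mem_singleton_iff] at ha2 hd2
                show K.Adj (f (a:W)) (f (d:W))
                rcases ha2 with h1 | h1 <;> rcases hd2 with h2 | h2
                · exact absurd (h1.trans h2.symm) hadW
                · rw [h1, h2]; exact hK2 (by rw [← h1, ← h2]; exact hadW)
                · rw [h1, h2]; exact (hK2 (by rw [← h1, ← h2]; exact hadW.symm)).symm
                · exact absurd (h1.trans h2.symm) hadW
              exact hedge.reachable.trans (ih d b hdv hbv r hrlen)
        · have hedge : (K.induce (f '' (S \ {v}))).Adj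
              ⟨f a, memT _ a.2 hav⟩ ⟨f c, memT _ c.2 hcv⟩ := by
            show K.Adj (f (a:W)) (f (c:W))
            exact hK1 _ _ hav hcv h
          have hqlen : q.length ≤ n := by
            simp [SimpleGraph.Walk.length_cons] at hlen; omega
          exact hedge.reachable.trans (ih c b hcv hbv q hqlen)
  rintro ⟨α, hα⟩ ⟨β, hβ⟩
  obtain ⟨x, ⟨hxS, hxv⟩, rfl⟩ := hα
  obtain ⟨y, ⟨hyS, hyv⟩, rfl⟩ := hβ
  obtain ⟨p⟩ := hconn.preconnected ⟨x, hxS⟩ ⟨y, hyS⟩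
  exact key p.length ⟨x, hxS⟩ ⟨y, hyS⟩ hxv hyv p le_rfl

lemma hasK4Minor_suppress {W U : Type*} {H : SimpleGraph W} {K : SimpleGraph U}
    (v u w : W) (f : W → U)
    (hinj : ∀ a b : W, a ≠ v → b ≠ v → f a = f b → a = b)
    (hu : u ≠ v) (hw : w ≠ v)
    (hN : H.neighborSet v ⊆ {u, w})
    (hK1 : ∀ a b : W, a ≠ v → b ≠ v → H.Adj a b → K.Adj (f a) (f b))
    (hK2 : u ≠ w → K.Adj (f u) (f w)) :
    HasK4Minor H → HasK4Minor K := by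
  rintro ⟨B, hne, hconn, hdisj, hedge⟩
  -- every branch set has an element ≠ v
  have hz : ∀ i, ∃ z ∈ B i, z ≠ v := by
    intro i
    by_contra hcon
    push_neg at hcon
    -- B i = {v}
    have hvBi : v ∈ B i := by
      obtain ⟨x, hx⟩ := hne i
      have := hcon x hx; subst this; exact hx
    -- for each k ≠ i, u ∈ B k ∨ w ∈ B k
    have hbk : ∀ k, k ≠ i → (u ∈ B k ∨ w ∈ B k) := by
      intro k hk
      obtain ⟨x, hxi, y, hyk, hxy⟩ := hedge i k (fun hh => hk hh.symm)
      have hx := hcon x hxi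
      subst hx
      have := hN hxy
      simp only [Set.mem_insert_iff, Set.mem_singleton_iff] at this
      rcases this with h | h
      · left; exact h ▸ hyk
      · right; exact h ▸ hyk
    have h3 : ∃ a b c : Fin 4, a ≠ i ∧ b ≠ i ∧ c ≠ i ∧ a ≠ b ∧ a ≠ c ∧ b ≠ c := by
      fin_cases i <;> decide
    obtain ⟨a, b, c, hai, hbi, hci, hab, hac, hbc⟩ := h3
    have ha := hbk a hai
    have hb := hbk b hbi
    have hc := hbk c hci
    rcases ha with ha | ha <;> rcases hb with hb | hb <;> rcases hc with hc | hc <;>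
      first
        | exact Set.disjoint_left.mp (hdisj a b hab) ha hb
        | exact Set.disjoint_left.mp (hdisj a c hac) ha hc
        | exact Set.disjoint_left.mp (hdisj b c hbc) hb hc
  -- helper: if v ∈ B i then ∃ neighbor of v in B i which is u or w
  have hnb : ∀ i, v ∈ B i → ∃ z ∈ B i, z ≠ v ∧ H.Adj v z := by
    intro i hvi
    obtain ⟨z₀, hz₀, hz₀v⟩ := hz i
    obtain ⟨y, hyB, hy⟩ := exists_adj_of_connected (hconn i) hvi hz₀ hz₀v
    exact ⟨y, hyB, fun hh => H.irrefl (hh ▸ hy), hy⟩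
  -- cross-edge helper when one endpoint is v
  have hcross : ∀ i j, i ≠ j → v ∈ B i → ∀ y ∈ B j, H.Adj v y →
      ∃ a ∈ f '' (B i \ {v}), ∃ b ∈ f '' (B j \ {v}), K.Adj a b := by
    intro i j hij hvi y hyj hvy
    have hyv : y ≠ v := fun hh => Set.disjoint_left.mp (hdisj i j hij) hvi (hh ▸ hyj)
    have hyN := hN hvy
    obtain ⟨z₁, hz₁B, hz₁v, hz₁adj⟩ := hnb i hvi
    have hz₁N := hN hz₁adj
    simp only [Set.mem_insert_iff, Set.mem_singleton_iff] at hyN hz₁N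
    have hzy : z₁ ≠ y := fun hh => Set.disjoint_left.mp (hdisj i j hij) (hh ▸ hz₁B) hyj
    have hKzy : K.Adj (f z₁) (f y) := by
      rcases hz₁N with h1 | h1 <;> rcases hyN with h2 | h2
      · exact absurd (h1.trans h2.symm) hzy
      · rw [h1, h2]; exact hK2 (by rw [← h1, ← h2]; exact hzy)
      · rw [h1, h2]; exact (hK2 (by rw [← h1, ← h2]; exact hzy.symm)).symm
      · exact absurd (h1.trans h2.symm) hzy
    exact ⟨f z₁, ⟨z₁, ⟨hz₁B, hz₁v⟩, rfl⟩, f y, ⟨y, ⟨hyj, hyv⟩, rfl⟩, hKzy⟩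
  refine ⟨fun i => f '' (B i \ {v}), ?_, ?_, ?_, ?_⟩
  · intro i
    obtain ⟨z, hzB, hzv⟩ := hz i
    exact ⟨f z, z, ⟨hzB, hzv⟩, rfl⟩
  · intro i
    by_cases hvi : v ∈ B i
    · exact connected_surgery v u w f hu hw hN hK1 hK2 (hconn i) (hz i)
    · have hBd : B i \ {v} = B i := Set.diff_singleton_eq_self hvi
      show (induce (f '' (B i \ {v})) K).Connected
      rw [hBd]
      refine connected_induce_image f (B i) (fun a b ha hb hab => ?_) (hconn i)
      exact hK1 a b (fun hh => hvi (hh ▸ ha)) (fun hh => hvi (hh ▸ hb)) hab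
  · intro i j hij
    rw [Set.disjoint_left]
    rintro α ⟨x, ⟨hxB, hxv⟩, rfl⟩ ⟨y, ⟨hyB, hyv⟩, hyx⟩
    have := hinj y x hyv hxv hyx
    subst this
    exact Set.disjoint_left.mp (hdisj i j hij) hxB hyB
  · intro i j hij
    obtain ⟨x, hxi, y, hyj, hxy⟩ := hedge i j hij
    by_cases hxv : x = v
    · subst hxv
      exact hcross i j hij hxi y hyj hxy
    by_cases hyv : y = v
    · subst hyv
      obtain ⟨b, hb, a, ha, hab⟩ := hcross j i hij.symm hyj x hxi hxy.symm
      exact ⟨a, ha, b, hb, hab.symm⟩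
    · exact ⟨f x, ⟨x, ⟨hxi, hxv⟩, rfl⟩, f y, ⟨y, ⟨hyj, hyv⟩, rfl⟩, hK1 x y hxv hyv hxy⟩


lemma ncard_neighborSet_comap {V : Type*} (G : SimpleGraph V) (p : V → Prop) (a : Subtype p) :
    ((G.comap (Subtype.val : Subtype p → V)).neighborSet a).ncard
      = (G.neighborSet (a : V) ∩ {x | p x}).ncard := by
  rw [← Set.ncard_image_of_injective _ (Subtype.val_injective (p := p))]
  congr 1
  ext x
  constructor
  · rintro ⟨⟨y, hy⟩, hadj, rfl⟩
    exact ⟨hadj, hy⟩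
  · rintro ⟨hadj, hx⟩
    exact ⟨⟨x, hx⟩, hadj, rfl⟩

universe u

lemma main_lemma (n : ℕ) : ∀ (V : Type u) [Fintype V] (G : SimpleGraph V),
    Fintype.card V ≤ n →
    ∃ X : Finset V, IsTransversal G X ∧
      5 * (X.card : ℝ) ≤ ∑ v : V, psi ((G.neighborSet v).ncard) := by
  induction n with
  | zero =>
    intro V _ G hcard
    haveI : IsEmpty V := Fintype.card_eq_zero_iff.mp (le_antisymm hcard (Nat.zero_le _))
    refine ⟨∅, not_hasK4Minor_of_subsingleton _, by simp⟩
  | succ n ih =>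
    intro V _ G hcard
    classical
    by_cases hVs : Subsingleton V
    · refine ⟨∅, not_hasK4Minor_of_subsingleton _, ?_⟩
      simp only [Finset.card_empty, Nat.cast_zero, mul_zero]
      exact Finset.sum_nonneg fun v _ => psi_nonneg _
    haveI hVnt : Nontrivial V := not_subsingleton_iff_nontrivial.mp hVs
    by_cases hsmall : ∃ v : V, (G.neighborSet v).ncard ≤ 2
    · -- CASE 1: a vertex of degree ≤ 2; suppress it
      obtain ⟨v, hv⟩ := hsmall
      -- choose u, w
      obtain ⟨u, w, hu, hw, hsub, hpair⟩ : ∃ u w : V, u ≠ v ∧ w ≠ v ∧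
          G.neighborSet v ⊆ {u, w} ∧ (u ≠ w → G.Adj v u ∧ G.Adj v w) := by
        by_cases h2 : (G.neighborSet v).ncard = 2
        · obtain ⟨u, w, huw, hNv⟩ := Set.ncard_eq_two.mp h2
          have hadju : G.Adj v u := by
            have : u ∈ G.neighborSet v := by rw [hNv]; exact Set.mem_insert _ _
            exact this
          have hadjw : G.Adj v w := by
            have : w ∈ G.neighborSet v := by rw [hNv]; exact Set.mem_insert_of_mem _ rfl
            exact this
          exact ⟨u, w, fun h => G.irrefl (h ▸ hadju), fun h => G.irrefl (h ▸ hadjw),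
            hNv.le, fun _ => ⟨hadju, hadjw⟩⟩
        · have h1 : (G.neighborSet v).ncard ≤ 1 := by omega
          by_cases hne : (G.neighborSet v).Nonempty
          · obtain ⟨u, huN⟩ := hne
            have hadju : G.Adj v u := huN
            refine ⟨u, u, fun h => G.irrefl (h ▸ hadju), fun h => G.irrefl (h ▸ hadju),
              ?_, fun h => absurd rfl h⟩
            intro x hx
            have := (Set.ncard_le_one (Set.toFinite _)).mp h1 x hx u huN
            simp [this]
          · obtain ⟨u, huv⟩ := exists_ne v
            refine ⟨u, u, huv, huv, ?_, fun h => absurd rfl h⟩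
            rw [Set.not_nonempty_iff_eq_empty.mp hne]
            exact Set.empty_subset _
      -- the suppressed graph on V' = {x // x ≠ v}
      set V' := {x : V // x ≠ v} with hV'
      let G₂ : SimpleGraph V' :=
        { Adj := fun a b => G.Adj ↑a ↑b ∨
            (u ≠ w ∧ ((↑a = u ∧ ↑b = w) ∨ (↑a = w ∧ ↑b = u)))
          symm := by
            constructor
            rintro a b (h | ⟨hne', h | h⟩)
            · exact Or.inl h.symm
            · exact Or.inr ⟨hne', Or.inr ⟨h.2, h.1⟩⟩
            · exact Or.inr ⟨hne', Or.inl ⟨h.2, h.1⟩⟩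
          loopless := by
            constructor
            rintro a (h | ⟨hne', ⟨h1, h2⟩ | ⟨h1, h2⟩⟩)
            · exact G.irrefl h
            · exact hne' (h1.symm.trans h2)
            · exact hne' (h2.symm.trans h1) }
      have hcard' : Fintype.card V' ≤ n := by
        have h : Fintype.card V' < Fintype.card V :=
          Fintype.card_subtype_lt (p := fun x : V => x ≠ v) (x := v) (by simp)
        omega
      obtain ⟨X', hX't, hX'b⟩ := ih V' G₂ hcard'
      set X : Finset V := X'.map ⟨Subtype.val, Subtype.val_injective⟩ with hX
      refine ⟨X, ?_, ?_⟩
      · -- transversal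
        intro hK4
        set W := ((↑X : Set V)ᶜ : Set V)
        have hnotX : ∀ x : ↥W, (x : V) ∉ X := fun x hx => x.2 (Finset.mem_coe.mpr hx)
        have hvX : v ∉ X := by
          intro hvX
          obtain ⟨a, _, ha⟩ := Finset.mem_map.mp hvX
          exact a.2 ha
        have hvW : v ∈ W := by
          simp only [W, Set.mem_compl_iff, Finset.mem_coe]
          exact hvX
        set vhat : ↥W := ⟨v, hvW⟩ with hvhat
        by_cases hWall : ∀ x : ↥W, x = vhat
        · haveI : Subsingleton (W : Set V) := ⟨fun a b => (hWall a).trans (hWall b).symm⟩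
          exact not_hasK4Minor_of_subsingleton _ hK4
        push_neg at hWall
        obtain ⟨x₀, hx₀⟩ := hWall
        have hx₀v : (x₀ : V) ≠ v := fun h => hx₀ (Subtype.ext h)
        have hlift : ∀ (x : V), x ∉ X → ∀ (h : x ≠ v), (⟨x, h⟩ : V') ∉ X' :=
          fun x hx h hmem => hx (Finset.mem_map.mpr ⟨⟨x, h⟩, hmem, rfl⟩)
        set U₂ := ((↑X' : Set V')ᶜ : Set V')
        haveI hUne : Nonempty ↥U₂ :=
          ⟨⟨⟨(x₀ : V), hx₀v⟩, fun hm => hlift _ (hnotX x₀) hx₀v (Finset.mem_coe.mp hm)⟩⟩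
        let f : ↥W → ↥U₂ := fun x =>
          if h : (x : V) = v then Classical.arbitrary _
          else ⟨⟨(x : V), h⟩, fun hm => hlift _ (hnotX x) h (Finset.mem_coe.mp hm)⟩
        have hfval : ∀ (x : ↥W) (h : (x : V) ≠ v),
            f x = ⟨⟨(x : V), h⟩, fun hm => hlift _ (hnotX x) h (Finset.mem_coe.mp hm)⟩ :=
          fun x h => dif_neg h
        -- choose u₁ w₁ in W
        have hNW : ∀ b : ↥W, G.Adj v (b : V) → (b : V) = u ∨ (b : V) = w := by
          intro b hb
          have := hsub hb
          simpa using this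
        apply hX't
        have hmaker : ∀ (t : ↥W), (t : V) ≠ v →
            ((∀ b : ↥W, G.Adj v (b : V) → b = t) →
            HasK4Minor (G₂.induce (↑X' : Set V')ᶜ)) := by
          intro t htv hall
          refine hasK4Minor_suppress vhat t t f ?_ (fun h => htv (congrArg Subtype.val h)) (fun h => htv (congrArg Subtype.val h)) ?_ ?_ (fun h => absurd rfl h) hK4
          · intro a b ha hb hfab
            have ha' : (a : V) ≠ v := fun h => ha (Subtype.ext h)
            have hb' : (b : V) ≠ v := fun h => hb (Subtype.ext h)
            rw [hfval a ha', hfval b hb'] at hfab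
            have := congrArg (fun z : ↥U₂ => ((z : V') : V)) hfab
            exact Subtype.ext this
          · intro b hb
            have hbv : G.Adj v (b : V) := hb
            simp [hall b hbv]
          · intro a b ha hb hab
            have ha' : (a : V) ≠ v := fun h => ha (Subtype.ext h)
            have hb' : (b : V) ≠ v := fun h => hb (Subtype.ext h)
            rw [hfval a ha', hfval b hb']
            show G₂.Adj _ _
            exact Or.inl hab
        by_cases hcase : u ≠ w ∧ u ∉ X ∧ w ∉ X
        · obtain ⟨huw, huX, hwX⟩ := hcase
          have huW : u ∈ W := by
            simp only [W, Set.mem_compl_iff, Finset.mem_coe]; exact huX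
          have hwW : w ∈ W := by
            simp only [W, Set.mem_compl_iff, Finset.mem_coe]; exact hwX
          set u₁ : ↥W := ⟨u, huW⟩
          set w₁ : ↥W := ⟨w, hwW⟩
          refine hasK4Minor_suppress vhat u₁ w₁ f ?_
            (fun h => hu (congrArg Subtype.val h))
            (fun h => hw (congrArg Subtype.val h)) ?_ ?_ ?_ hK4
          · intro a b ha hb hfab
            have ha' : (a : V) ≠ v := fun h => ha (Subtype.ext h)
            have hb' : (b : V) ≠ v := fun h => hb (Subtype.ext h)
            rw [hfval a ha', hfval b hb'] at hfab
            have := congrArg (fun z : ↥U₂ => ((z : V') : V)) hfab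
            exact Subtype.ext this
          · intro b hb
            have hbv : G.Adj v (b : V) := hb
            rcases hNW b hbv with h | h
            · left; exact Subtype.ext h
            · right; exact Subtype.ext h
          · intro a b ha hb hab
            have ha' : (a : V) ≠ v := fun h => ha (Subtype.ext h)
            have hb' : (b : V) ≠ v := fun h => hb (Subtype.ext h)
            rw [hfval a ha', hfval b hb']
            show G₂.Adj _ _
            exact Or.inl hab
          · intro _
            rw [hfval u₁ hu, hfval w₁ hw]
            show G₂.Adj _ _
            exact Or.inr ⟨huw, Or.inl ⟨rfl, rfl⟩⟩
        · -- at most one possible neighbor of v in W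
          by_cases huw : u = w
          · subst huw
            by_cases huX : u ∈ X
            · refine hmaker x₀ hx₀v ?_
              intro b hb
              rcases hNW b hb with h | h <;>
                exact absurd huX (h ▸ hnotX b)
            · refine hmaker ⟨u, huX⟩ hu ?_
              intro b hb
              rcases hNW b hb with h | h <;> exact Subtype.ext h
          · -- u ≠ w, so u ∈ X or w ∈ X
            have : u ∈ X ∨ w ∈ X := by
              by_contra hcon
              push_neg at hcon
              exact hcase ⟨huw, hcon.1, hcon.2⟩
            rcases this with huX | hwX
            · by_cases hwX : w ∈ X
              · refine hmaker x₀ hx₀v ?_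
                intro b hb
                rcases hNW b hb with h | h
                · exact absurd huX (h ▸ hnotX b)
                · exact absurd hwX (h ▸ hnotX b)
              · refine hmaker ⟨w, by
                  simp only [W, Set.mem_compl_iff, Finset.mem_coe]; exact hwX⟩ hw ?_
                intro b hb
                rcases hNW b hb with h | h
                · exact absurd huX (h ▸ hnotX b)
                · exact Subtype.ext h
            · by_cases huX : u ∈ X
              · refine hmaker x₀ hx₀v ?_
                intro b hb
                rcases hNW b hb with h | h
                · exact absurd huX (h ▸ hnotX b)
                · exact absurd hwX (h ▸ hnotX b)
              · refine hmaker ⟨u, by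
                  simp only [W, Set.mem_compl_iff, Finset.mem_coe]; exact huX⟩ hu ?_
                intro b hb
                rcases hNW b hb with h | h
                · exact Subtype.ext h
                · exact absurd hwX (h ▸ hnotX b)
      · -- potential bound
        have hdeg2 : ∀ a : V', (G₂.neighborSet a).ncard ≤ (G.neighborSet (a : V)).ncard := by
          intro a
          rw [← Set.ncard_image_of_injective _ (Subtype.val_injective (p := fun x => x ≠ v))]
          by_cases hau : u ≠ w ∧ (a : V) = u
          · obtain ⟨huw, hav⟩ := hau
            have hvNu : v ∈ G.neighborSet u := (hpair huw).1.symm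
            have hsubim : Subtype.val '' G₂.neighborSet a ⊆
                insert w (G.neighborSet u \ {v}) := by
              rintro x ⟨b, hb, rfl⟩
              rcases hb with h | ⟨_, ⟨h1, h2⟩ | ⟨h1, h2⟩⟩
              · right; exact ⟨hav ▸ h, b.2⟩
              · left; exact h2
              · exact absurd (hav ▸ h1 : u = w) huw
            calc (Subtype.val '' G₂.neighborSet a).ncard
                ≤ (insert w (G.neighborSet u \ {v})).ncard :=
                  Set.ncard_le_ncard hsubim (Set.toFinite _)
              _ ≤ (G.neighborSet u \ {v}).ncard + 1 := Set.ncard_insert_le _ _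
              _ ≤ (G.neighborSet (a : V)).ncard := by
                  rw [hav, Set.ncard_diff_singleton_of_mem hvNu]
                  have : 0 < (G.neighborSet u).ncard :=
                    (Set.ncard_pos (Set.toFinite _)).mpr ⟨v, hvNu⟩
                  omega
          by_cases haw : u ≠ w ∧ (a : V) = w
          · obtain ⟨huw, hav⟩ := haw
            have hvNw : v ∈ G.neighborSet w := (hpair huw).2.symm
            have hsubim : Subtype.val '' G₂.neighborSet a ⊆
                insert u (G.neighborSet w \ {v}) := by
              rintro x ⟨b, hb, rfl⟩
              rcases hb with h | ⟨_, ⟨h1, h2⟩ | ⟨h1, h2⟩⟩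
              · right; exact ⟨hav ▸ h, b.2⟩
              · exact absurd (hav ▸ h1 : w = u) (Ne.symm huw)
              · left; exact h2
            calc (Subtype.val '' G₂.neighborSet a).ncard
                ≤ (insert u (G.neighborSet w \ {v})).ncard :=
                  Set.ncard_le_ncard hsubim (Set.toFinite _)
              _ ≤ (G.neighborSet w \ {v}).ncard + 1 := Set.ncard_insert_le _ _
              _ ≤ (G.neighborSet (a : V)).ncard := by
                  rw [hav, Set.ncard_diff_singleton_of_mem hvNw]
                  have : 0 < (G.neighborSet w).ncard :=
                    (Set.ncard_pos (Set.toFinite _)).mpr ⟨v, hvNw⟩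
                  omega
          · have hsubim : Subtype.val '' G₂.neighborSet a ⊆ G.neighborSet (a : V) := by
              rintro x ⟨b, hb, rfl⟩
              rcases hb with h | ⟨huw', ⟨h1, h2⟩ | ⟨h1, h2⟩⟩
              · exact h
              · exact absurd ⟨huw', h1⟩ hau
              · exact absurd ⟨huw', h1⟩ haw
            exact Set.ncard_le_ncard hsubim (Set.toFinite _)
        have hsum : ∑ a : V', psi ((G₂.neighborSet a).ncard)
            ≤ ∑ x : V, psi ((G.neighborSet x).ncard) := by
          calc ∑ a : V', psi ((G₂.neighborSet a).ncard)
              ≤ ∑ a : V', psi ((G.neighborSet (a : V)).ncard) :=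
                Finset.sum_le_sum fun a _ => psi_mono (hdeg2 a)
            _ = ∑ x ∈ Finset.univ.erase v, psi ((G.neighborSet x).ncard) := by
                rw [Finset.sum_subtype (Finset.univ.erase v)
                  (p := fun x : V => x ≠ v) (fun x => by simp)
                  (fun x => psi ((G.neighborSet x).ncard))]
            _ ≤ ∑ x : V, psi ((G.neighborSet x).ncard) :=
                Finset.sum_le_sum_of_subset_of_nonneg (Finset.erase_subset _ _)
                  (fun x _ _ => psi_nonneg _)
        rw [hX, Finset.card_map]
        exact le_trans hX'b hsum
    · -- CASE 2: min degree ≥ 3; delete a max-degree vertex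
      push_neg at hsmall
      have hbig : ∀ x : V, 3 ≤ (G.neighborSet x).ncard := fun x => hsmall x
      obtain ⟨v, -, hvmax⟩ := Finset.exists_max_image Finset.univ
        (fun x => (G.neighborSet x).ncard) ⟨Classical.arbitrary V, Finset.mem_univ _⟩
      have hvmax' : ∀ x : V, (G.neighborSet x).ncard ≤ (G.neighborSet v).ncard :=
        fun x => hvmax x (Finset.mem_univ x)
      set D := (G.neighborSet v).ncard with hD
      have hD3 : 3 ≤ D := hbig v
      set V' := {x : V // x ≠ v} with hV'
      let G₁ : SimpleGraph V' := G.comap (Subtype.val : V' → V)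
      have hcard' : Fintype.card V' ≤ n := by
        have h : Fintype.card V' < Fintype.card V :=
          Fintype.card_subtype_lt (p := fun x : V => x ≠ v) (x := v) (by simp)
        omega
      obtain ⟨X', hX't, hX'b⟩ := ih V' G₁ hcard'
      set X : Finset V := insert v (X'.map ⟨Subtype.val, Subtype.val_injective⟩) with hX
      have hvX : v ∈ X := Finset.mem_insert_self _ _
      refine ⟨X, ?_, ?_⟩
      · -- transversal
        intro hK4
        apply hX't
        set W := ((↑X : Set V)ᶜ : Set V) with hW
        have hnotX : ∀ x : ↥W, (x : V) ∉ X := fun x hx => x.2 (Finset.mem_coe.mpr hx)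
        have hxv : ∀ x : ↥W, (x : V) ≠ v := fun x h => hnotX x (h ▸ hvX)
        have hlift : ∀ x : ↥W, (⟨(x : V), hxv x⟩ : V') ∉ X' := by
          intro x hmem
          exact hnotX x (Finset.mem_insert_of_mem (Finset.mem_map.mpr ⟨_, hmem, rfl⟩))
        let f : ↥W → ↥((↑X' : Set V')ᶜ) := fun x =>
          ⟨⟨(x : V), hxv x⟩, fun hm => hlift x (Finset.mem_coe.mp hm)⟩
        refine hasK4Minor_map f ?_ ?_ hK4
        · intro a b hab
          have : ((a : V) : V) = (b : V) := by
            have := congrArg (fun z : ↥((↑X' : Set V')ᶜ) => ((z : V') : V)) hab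
            exact this
          exact Subtype.ext this
        · intro a b hab
          exact hab
      · -- potential bound
        have hcardX : (X.card : ℝ) = (X'.card : ℝ) + 1 := by
          rw [hX, Finset.card_insert_of_notMem, Finset.card_map]
          · push_cast; ring
          · intro hmem
            obtain ⟨a, -, ha⟩ := Finset.mem_map.mp hmem
            exact a.2 ha
        -- degree in G₁
        have hdeg1 : ∀ a : V', (G₁.neighborSet a).ncard
            = ((G.neighborSet (a : V)) \ {v}).ncard := by
          intro a
          rw [ncard_neighborSet_comap]
          congr 1
        set NF : Finset V := (Set.toFinite (G.neighborSet v)).toFinset with hNF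
        have hNFcard : NF.card = D := by
          rw [hNF, hD, Set.ncard_eq_toFinset_card _ (Set.toFinite _)]
        have hNFsub : NF ⊆ Finset.univ.erase v := by
          intro x hx
          rw [Set.Finite.mem_toFinset] at hx
          exact Finset.mem_erase.mpr ⟨fun h => G.irrefl (h ▸ hx), Finset.mem_univ _⟩
        have hDne : ((D : ℝ)) ≠ 0 := by
          have : (3:ℝ) ≤ (D:ℝ) := by exact_mod_cast hD3
          linarith
        set c : ℝ := (5 - psi D) / D with hc
        have hpoint : ∀ x ∈ Finset.univ.erase v,
            psi ((G.neighborSet x \ {v}).ncard) + (if x ∈ NF then c else 0)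
              ≤ psi ((G.neighborSet x).ncard) := by
          intro x hx
          by_cases hadj : x ∈ NF
          · rw [if_pos hadj]
            rw [Set.Finite.mem_toFinset] at hadj
            have hvNx : v ∈ G.neighborSet x := hadj.symm
            rw [Set.ncard_diff_singleton_of_mem hvNx]
            exact psi_drop (hbig x) (hvmax' x)
          · rw [if_neg hadj, add_zero]
            rw [Set.Finite.mem_toFinset] at hadj
            have hvNx : v ∉ G.neighborSet x := fun h => hadj h.symm
            rw [Set.diff_singleton_eq_self hvNx]
        have hsum1 : ∑ a : V', psi ((G₁.neighborSet a).ncard)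
            = ∑ x ∈ Finset.univ.erase v, psi ((G.neighborSet x \ {v}).ncard) := by
          calc ∑ a : V', psi ((G₁.neighborSet a).ncard)
              = ∑ a : V', psi ((G.neighborSet (a : V) \ {v}).ncard) :=
                Finset.sum_congr rfl fun a _ => by rw [hdeg1]
            _ = ∑ x ∈ Finset.univ.erase v, psi ((G.neighborSet x \ {v}).ncard) := by
                rw [Finset.sum_subtype (Finset.univ.erase v)
                  (p := fun x : V => x ≠ v) (fun x => by simp)
                  (fun x => psi ((G.neighborSet x \ {v}).ncard))]
        have hsum2 : ∑ x ∈ Finset.univ.erase v, (if x ∈ NF then c else 0) = 5 - psi D := by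
          rw [Finset.sum_ite_mem]
          have : Finset.univ.erase v ∩ NF = NF := by
            rw [Finset.inter_eq_right]
            exact hNFsub
          rw [this, Finset.sum_const, hNFcard, nsmul_eq_mul, hc]
          field_simp
        have hsum3 : ∑ x ∈ Finset.univ.erase v, psi ((G.neighborSet x \ {v}).ncard)
            + (5 - psi D) ≤ ∑ x ∈ Finset.univ.erase v, psi ((G.neighborSet x).ncard) := by
          rw [← hsum2, ← Finset.sum_add_distrib]
          exact Finset.sum_le_sum hpoint
        have hsplit : ∑ x : V, psi ((G.neighborSet x).ncard)
            = psi D + ∑ x ∈ Finset.univ.erase v, psi ((G.neighborSet x).ncard) := by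
          rw [hD, ← Finset.add_sum_erase Finset.univ _ (Finset.mem_univ v)]
        rw [hcardX]
        have := hX'b
        rw [hsum1] at this
        rw [hsplit]
        linarith

end Helpers

theorem statement16 {V : Type*} [Fintype V] (G : SimpleGraph V) :
    (transNum G : ℝ) ≤ (1 / 5) * ∑ v : V, psi ((G.neighborSet v).ncard) := by
  obtain ⟨X, hXt, hXb⟩ := main_lemma (Fintype.card V) V G le_rfl
  have h1 : transNum G ≤ X.card := Nat.sInf_le ⟨X, rfl, hXt⟩
  have h2 : (transNum G : ℝ) ≤ (X.card : ℝ) := by exact_mod_cast h1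
  linarith
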